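/- Let E be a real Hilbert space (e.g. EuclideanSpace ℝ (Fin d)) and let h : E → ℝ be differentiable with gradient ∇h satisfying ‖∇h(θ1) − ∇h(θ2)‖ ≤ β‖θ1 − θ2‖ + η for all θ1, θ2, where β > 0 and η > 0. Then for all θ1, θ2, h(θ1) − h(θ2) ≤ ⟪∇h(θ2), θ1 − θ2⟫ + (β/2)‖θ1 − θ2‖² + η‖θ1 − θ2‖. -/

import Mathlib

open RealInnerProductSpace

/-- Lemma 4.2(i) (η-approximate descent lemma): if `h` is differentiable with gradient
`g` satisfying `‖g θ1 - g θ2‖ ≤ β‖θ1 - θ2‖ + η`, then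
`h θ1 - h θ2 ≤ ⟪g θ2, θ1 - θ2⟫ + (β/2)‖θ1 - θ2‖² + η‖θ1 - θ2‖`. -/
theorem approx_descent_lemma
    {E : Type*} [NormedAddCommGroup E] [InnerProductSpace ℝ E] [CompleteSpace E]
    (h : E → ℝ) (g : E → E) (β η : ℝ) (hβ : 0 < β) (hη : 0 < η)
    (hgrad : ∀ θ : E, HasGradientAt h (g θ) θ)
    (happrox : ∀ θ1 θ2 : E, ‖g θ1 - g θ2‖ ≤ β * ‖θ1 - θ2‖ + η) :
    ∀ θ1 θ2 : E,
      h θ1 - h θ2 ≤ ⟪g θ2, θ1 - θ2⟫ + β / 2 * ‖θ1 - θ2‖ ^ 2 + η * ‖θ1 - θ2‖ := by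
  intro θ1 θ2
  set v := θ1 - θ2 with hv
  set c : ℝ → E := fun t => θ2 + t • v with hc
  set φ : ℝ → ℝ := fun t => h (c t) with hφ
  set φ' : ℝ → ℝ := fun t => ⟪g (c t), v⟫ with hφ'
  have hderiv : ∀ t : ℝ, HasDerivAt φ (φ' t) t := by
    intro t
    have hct : HasDerivAt c v t := by simpa [c] using ((hasDerivAt_id t).smul_const v).const_add θ2
    have := (hgrad (c t)).hasFDerivAt.comp_hasDerivAt t hct
    simpa [φ, φ', Function.comp_def, InnerProductSpace.toDual_apply_apply] using this
  -- pointwise bound on the derivative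
  have hbound : ∀ t ∈ Set.Icc (0:ℝ) 1, φ' t ≤ ⟪g θ2, v⟫ + (β * t * ‖v‖ + η) * ‖v‖ := by
    intro t ht
    have hsplit : φ' t = ⟪g θ2, v⟫ + ⟪g (c t) - g θ2, v⟫ := by
      simp [φ', inner_sub_left]
    rw [hsplit]
    gcongr _ + ?_
    calc ⟪g (c t) - g θ2, v⟫ ≤ ‖g (c t) - g θ2‖ * ‖v‖ := real_inner_le_norm _ _
      _ ≤ (β * ‖c t - θ2‖ + η) * ‖v‖ := by
          gcongr
          exact happrox _ _
      _ = (β * (|t| * ‖v‖) + η) * ‖v‖ := by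
          simp [c, norm_smul, abs_of_nonneg]
      _ = (β * t * ‖v‖ + η) * ‖v‖ := by
          rw [abs_of_nonneg ht.1]; ring
  -- integrability of φ'
  have hmeas : Measurable φ' := by
    have : φ' = deriv φ := by
      funext t; exact (hderiv t).deriv.symm
    rw [this]; exact measurable_deriv φ
  have hint : IntervalIntegrable φ' MeasureTheory.volume 0 1 := by
    have hb : ∀ t ∈ Set.Icc (0:ℝ) 1, ‖φ' t‖ ≤ ‖g θ2‖ * ‖v‖ + (β * ‖v‖ + η) * ‖v‖ := by
      intro t ht
      have h1 : ‖φ' t‖ ≤ ‖g (c t)‖ * ‖v‖ := by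
        simpa [φ'] using abs_real_inner_le_norm (g (c t)) v
      have h2 : ‖g (c t)‖ ≤ ‖g θ2‖ + (β * ‖v‖ + η) := by
        have := happrox (c t) θ2
        have h3 : ‖c t - θ2‖ = |t| * ‖v‖ := by simp [c, norm_smul]
        have h4 : |t| ≤ 1 := by
          rw [abs_of_nonneg ht.1]; exact ht.2
        have h5 : ‖g (c t)‖ - ‖g θ2‖ ≤ ‖g (c t) - g θ2‖ := norm_sub_norm_le _ _
        have h6 : β * (|t| * ‖v‖) ≤ β * ‖v‖ :=
          mul_le_mul_of_nonneg_left (mul_le_of_le_one_left (norm_nonneg v) h4) hβ.le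
        rw [h3] at this
        linarith
      calc ‖φ' t‖ ≤ ‖g (c t)‖ * ‖v‖ := h1
        _ ≤ (‖g θ2‖ + (β * ‖v‖ + η)) * ‖v‖ := by gcongr
        _ = ‖g θ2‖ * ‖v‖ + (β * ‖v‖ + η) * ‖v‖ := by ring
    apply IntervalIntegrable.mono_fun' (g := fun _ => ‖g θ2‖ * ‖v‖ + (β * ‖v‖ + η) * ‖v‖)
      intervalIntegrable_const hmeas.aestronglyMeasurable
    apply MeasureTheory.ae_restrict_of_forall_mem measurableSet_uIoc
    intro t ht
    refine hb t ?_
    have : Set.uIoc (0:ℝ) 1 = Set.Ioc 0 1 := by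
      rw [Set.uIoc_of_le]; norm_num
    rw [this] at ht
    exact ⟨le_of_lt ht.1, ht.2⟩
  -- fundamental theorem of calculus
  have hftc : φ 1 - φ 0 = ∫ t in (0:ℝ)..1, φ' t :=
    (intervalIntegral.integral_eq_sub_of_hasDerivAt (fun t _ => hderiv t) hint).symm
  have hφ1 : φ 1 = h θ1 := by simp [φ, c, hv]
  have hφ0 : φ 0 = h θ2 := by simp [φ, c]
  have hintbound : ∫ t in (0:ℝ)..1, φ' t ≤
      ∫ t in (0:ℝ)..1, (⟪g θ2, v⟫ + (β * t * ‖v‖ + η) * ‖v‖) := by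
    apply intervalIntegral.integral_mono_on (by norm_num) hint
    · exact (Continuous.intervalIntegrable (by continuity) 0 1)
    · exact hbound
  have hcalc : ∫ t in (0:ℝ)..1, (⟪g θ2, v⟫ + (β * t * ‖v‖ + η) * ‖v‖)
      = ⟪g θ2, v⟫ + β / 2 * ‖v‖ ^ 2 + η * ‖v‖ := by
    have heq : (fun t : ℝ => ⟪g θ2, v⟫ + (β * t * ‖v‖ + η) * ‖v‖)
        = fun t : ℝ => (⟪g θ2, v⟫ + η * ‖v‖) + t * (β * ‖v‖ ^ 2) := by
      funext t; ring
    rw [heq, intervalIntegral.integral_add intervalIntegrable_const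
      ((intervalIntegral.intervalIntegrable_id).mul_const _),
      intervalIntegral.integral_mul_const, integral_id,
      intervalIntegral.integral_const]
    norm_num; ring
  have := hintbound.trans_eq hcalc
  rw [← hftc, hφ1, hφ0] at this
  simpa [hv] using this
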